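/- If the edges of a complete bipartite graph H are 2-coloured and the colouring is not split, then one of the two colours has exactly one non-trivial monochromatic component. -/

import Mathlib

open SimpleGraph

/-- The simple graph on `α ⊕ β` whose edges are the colour-`c` edges of the
(not necessarily proper) edge-colouring `χ` of the complete bipartite graph
with biparts `α` and `β`. -/
def colourGraph {α β : Type} {r : ℕ} (χ : α → β → Fin r) (c : Fin r) :
    SimpleGraph (α ⊕ β) where
  Adj x y := ∃ a b, χ a b = c ∧
    ((x = Sum.inl a ∧ y = Sum.inr b) ∨ (x = Sum.inr b ∧ y = Sum.inl a))
  symm := by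
    refine ⟨?_⟩
    rintro x y ⟨a, b, hc, h | h⟩
    · exact ⟨a, b, hc, Or.inr ⟨h.2, h.1⟩⟩
    · exact ⟨a, b, hc, Or.inl ⟨h.2, h.1⟩⟩
  loopless := by
    refine ⟨?_⟩
    rintro x ⟨a, b, hc, ⟨h1, h2⟩ | ⟨h1, h2⟩⟩ <;> simp_all

/-- A monochromatic component is non-trivial if it meets both biparts. -/
def Nontriv {α β : Type} {r : ℕ} (χ : α → β → Fin r) (c : Fin r)
    (K : (colourGraph χ c).ConnectedComponent) : Prop :=
  (∃ a : α, Sum.inl a ∈ K.supp) ∧ (∃ b : β, Sum.inr b ∈ K.supp)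

/-- A 2-edge-colouring of a complete bipartite graph is split if all
monochromatic components are non-trivial and each colour has exactly two
monochromatic components. -/
def IsSplit {α β : Type} (χ : α → β → Fin 2) : Prop :=
  (∀ (c : Fin 2) (K : (colourGraph χ c).ConnectedComponent), Nontriv χ c K) ∧
  (∀ c : Fin 2, Nat.card ((colourGraph χ c).ConnectedComponent) = 2)


lemma colourGraph_adj {α β : Type} {r : ℕ} (χ : α → β → Fin r) (c : Fin r) (a : α) (b : β) :
    (colourGraph χ c).Adj (Sum.inl a) (Sum.inr b) ↔ χ a b = c := by
  constructor
  · rintro ⟨a', b', hc, ⟨h1, h2⟩ | ⟨h1, h2⟩⟩ <;> simp_all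
  · intro h; exact ⟨a, b, h, Or.inl ⟨rfl, rfl⟩⟩

lemma comp_eq_of_colour {α β : Type} {r : ℕ} {χ : α → β → Fin r} {c : Fin r} {a : α} {b : β}
    (h : χ a b = c) :
    (colourGraph χ c).connectedComponentMk (Sum.inl a) =
      (colourGraph χ c).connectedComponentMk (Sum.inr b) :=
  ConnectedComponent.sound ((colourGraph_adj χ c a b).mpr h).reachable

lemma unique_of_all {α β : Type} [Nonempty α] [Nonempty β] (χ : α → β → Fin 2) (c : Fin 2)
    (h : ∀ a b, χ a b = c) :
    ∃! K : (colourGraph χ c).ConnectedComponent, Nontriv χ c K := by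
  obtain ⟨a0⟩ := ‹Nonempty α›
  obtain ⟨b0⟩ := ‹Nonempty β›
  refine ⟨(colourGraph χ c).connectedComponentMk (Sum.inl a0),
    ⟨⟨a0, by rw [ConnectedComponent.mem_supp_iff]⟩,
     ⟨b0, by rw [ConnectedComponent.mem_supp_iff, ← comp_eq_of_colour (h a0 b0)]⟩⟩, ?_⟩
  rintro K ⟨⟨a, ha⟩, -⟩
  rw [ConnectedComponent.mem_supp_iff] at ha
  rw [← ha, comp_eq_of_colour (h a b0), ← comp_eq_of_colour (h a0 b0)]

/-- If a 2-edge-colouring of a complete bipartite graph is not split, then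
some colour has exactly one non-trivial monochromatic component. -/
theorem exists_colour_with_unique_nontrivial_component
    {α β : Type} [Fintype α] [Fintype β] [Nonempty α] [Nonempty β]
    (χ : α → β → Fin 2) (hns : ¬ IsSplit χ) :
    ∃ c : Fin 2, ∃! K : (colourGraph χ c).ConnectedComponent, Nontriv χ c K := by
  classical
  have fin2 : ∀ x : Fin 2, x ≠ 0 → x = 1 := by decide
  have fin2' : ∀ x : Fin 2, x = 0 ∨ x = 1 := by decide
  by_cases h0 : ∃! K : (colourGraph χ 0).ConnectedComponent, Nontriv χ 0 K
  · exact ⟨0, h0⟩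
  by_cases h1 : ∃! K : (colourGraph χ 1).ConnectedComponent, Nontriv χ 1 K
  · exact ⟨1, h1⟩
  exfalso
  have hn0 : ∃ K, Nontriv χ 0 K := by
    by_contra hn
    push_neg at hn
    have hall : ∀ a b, χ a b = 1 := by
      intro a b
      refine fin2 _ fun hc => hn ((colourGraph χ 0).connectedComponentMk (Sum.inl a))
        ⟨⟨a, by rw [ConnectedComponent.mem_supp_iff]⟩,
         ⟨b, by rw [ConnectedComponent.mem_supp_iff, ← comp_eq_of_colour hc]⟩⟩
    exact h1 (unique_of_all χ 1 hall)
  obtain ⟨K1, hK1⟩ := hn0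
  have hn2 : ∃ K2, Nontriv χ 0 K2 ∧ K2 ≠ K1 := by
    by_contra h
    push_neg at h
    exact h0 ⟨K1, hK1, fun y hy => h y hy⟩
  obtain ⟨K2, hK2, hK21⟩ := hn2
  obtain ⟨⟨a1, ha1⟩, ⟨b1, hb1⟩⟩ := hK1
  obtain ⟨⟨a2, ha2⟩, ⟨b2, hb2⟩⟩ := hK2
  rw [ConnectedComponent.mem_supp_iff] at ha1 hb1 ha2 hb2
  set mk0 := (colourGraph χ 0).connectedComponentMk with hmk0
  set mk1 := (colourGraph χ 1).connectedComponentMk with hmk1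
  have blue : ∀ a b, mk0 (Sum.inl a) ≠ mk0 (Sum.inr b) → χ a b = 1 := by
    intro a b hne
    exact fin2 _ fun hc => hne (comp_eq_of_colour hc)
  set C := mk1 (Sum.inr b2) with hC
  set C' := mk1 (Sum.inr b1) with hC'
  have c1 : ∀ a, mk0 (Sum.inl a) = K1 → mk1 (Sum.inl a) = C := fun a ha =>
    comp_eq_of_colour (blue a b2 (by rw [ha, hb2]; exact Ne.symm hK21))
  have c2 : ∀ a, mk0 (Sum.inl a) ≠ K1 → mk1 (Sum.inl a) = C' := fun a ha =>
    comp_eq_of_colour (blue a b1 (by rw [hb1]; exact ha))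
  have c3 : ∀ b, mk0 (Sum.inr b) = K1 → mk1 (Sum.inr b) = C' := fun b hb =>
    ((comp_eq_of_colour (blue a2 b (by rw [ha2, hb]; exact hK21))).symm).trans
      (c2 a2 (by rw [ha2]; exact hK21))
  have c4 : ∀ b, mk0 (Sum.inr b) ≠ K1 → mk1 (Sum.inr b) = C := fun b hb =>
    ((comp_eq_of_colour (blue a1 b (by rw [ha1]; exact fun h => hb h.symm))).symm).trans
      (c1 a1 ha1)
  by_cases hCC : C = C'
  · apply h1
    refine ⟨C, ⟨⟨a1, by rw [ConnectedComponent.mem_supp_iff]; exact c1 a1 ha1⟩,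
      ⟨b2, by rw [ConnectedComponent.mem_supp_iff]⟩⟩, ?_⟩
    rintro K ⟨⟨a, ha⟩, -⟩
    rw [ConnectedComponent.mem_supp_iff] at ha
    rw [← ha]
    by_cases h : mk0 (Sum.inl a) = K1
    · exact c1 a h
    · exact (c2 a h).trans hCC.symm
  · apply hns
    have d1 : ∀ a b, mk0 (Sum.inl a) = K1 → mk0 (Sum.inr b) = K1 → χ a b = 0 := by
      intro a b ha hb
      by_contra hc
      exact hCC (((c1 a ha).symm.trans (comp_eq_of_colour (fin2 _ hc))).trans (c3 b hb))
    have d2 : ∀ a b, mk0 (Sum.inl a) ≠ K1 → mk0 (Sum.inr b) ≠ K1 → χ a b = 0 := by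
      intro a b ha hb
      by_contra hc
      exact hCC ((((c2 a ha).symm.trans (comp_eq_of_colour (fin2 _ hc))).trans (c4 b hb)).symm)
    have e1 : ∀ a, mk0 (Sum.inl a) ≠ K1 → mk0 (Sum.inl a) = K2 := fun a ha =>
      (comp_eq_of_colour (d2 a b2 ha (by rw [hb2]; exact hK21))).trans hb2
    have e2 : ∀ b, mk0 (Sum.inr b) ≠ K1 → mk0 (Sum.inr b) = K2 := fun b hb =>
      ((comp_eq_of_colour (d2 a2 b (by rw [ha2]; exact hK21) hb)).symm).trans ha2
    have red_cases : ∀ v : α ⊕ β, mk0 v = K1 ∨ mk0 v = K2 := by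
      rintro (a | b)
      · by_cases h : mk0 (Sum.inl a) = K1
        · exact Or.inl h
        · exact Or.inr (e1 a h)
      · by_cases h : mk0 (Sum.inr b) = K1
        · exact Or.inl h
        · exact Or.inr (e2 b h)
    have blue_cases : ∀ v : α ⊕ β, mk1 v = C ∨ mk1 v = C' := by
      rintro (a | b)
      · by_cases h : mk0 (Sum.inl a) = K1
        · exact Or.inl (c1 a h)
        · exact Or.inr (c2 a h)
      · by_cases h : mk0 (Sum.inr b) = K1
        · exact Or.inr (c3 b h)
        · exact Or.inl (c4 b h)
    have red_all : ∀ K : (colourGraph χ 0).ConnectedComponent, K = K1 ∨ K = K2 := by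
      intro K
      obtain ⟨v, hv⟩ := K.exists_rep
      rw [← hv]
      exact red_cases v
    have blue_all : ∀ K : (colourGraph χ 1).ConnectedComponent, K = C ∨ K = C' := by
      intro K
      obtain ⟨v, hv⟩ := K.exists_rep
      rw [← hv]
      exact blue_cases v
    have hK1nt : Nontriv χ 0 K1 :=
      ⟨⟨a1, by rw [ConnectedComponent.mem_supp_iff]; exact ha1⟩,
       ⟨b1, by rw [ConnectedComponent.mem_supp_iff]; exact hb1⟩⟩
    have hK2nt : Nontriv χ 0 K2 :=
      ⟨⟨a2, by rw [ConnectedComponent.mem_supp_iff]; exact ha2⟩,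
       ⟨b2, by rw [ConnectedComponent.mem_supp_iff]; exact hb2⟩⟩
    have hCnt : Nontriv χ 1 C :=
      ⟨⟨a1, by rw [ConnectedComponent.mem_supp_iff]; exact c1 a1 ha1⟩,
       ⟨b2, by rw [ConnectedComponent.mem_supp_iff]⟩⟩
    have hC'nt : Nontriv χ 1 C' :=
      ⟨⟨a2, by rw [ConnectedComponent.mem_supp_iff]; exact c2 a2 (by rw [ha2]; exact hK21)⟩,
       ⟨b1, by rw [ConnectedComponent.mem_supp_iff]⟩⟩
    constructor
    · intro c K
      rcases fin2' c with rfl | rfl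
      · rcases red_all K with h | h <;> rw [h]
        · exact hK1nt
        · exact hK2nt
      · rcases blue_all K with h | h <;> rw [h]
        · exact hCnt
        · exact hC'nt
    · intro c
      rcases fin2' c with rfl | rfl
      · rw [Nat.card_eq_two_iff]
        refine ⟨K1, K2, Ne.symm hK21, ?_⟩
        ext K
        simp only [Set.mem_insert_iff, Set.mem_singleton_iff, Set.mem_univ, iff_true]
        exact red_all K
      · rw [Nat.card_eq_two_iff]
        refine ⟨C, C', hCC, ?_⟩
        ext K
        simp only [Set.mem_insert_iff, Set.mem_singleton_iff, Set.mem_univ, iff_true]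
        exact blue_all K
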